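/- For every n ≥ 1 and every function h on [0,1] that is n-times differentiable with h, h', ..., h^{(n-1)} absolutely continuous and h^{(j)}(0) = 0 for 0 ≤ j ≤ n−1, one has ∫₀¹ |h(x)/xⁿ|² dx ≤ (4ⁿ/((2n−1)!!)²) ∫₀¹ |h^{(n)}(x)|² dx. -/

import Mathlib

open MeasureTheory intervalIntegral
open scoped ENNReal

open Set in
open scoped ENNReal in
lemma hardy_step (r : ℝ) (hr : 0 < r) (g g' : ℝ → ℝ) (hg' : Measurable g')
    (hg : ∀ x ∈ Set.Ioc (0:ℝ) 1, g x = ∫ t in (0:ℝ)..x, g' t) :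
    ∫⁻ x in Set.Ioc (0:ℝ) 1, ENNReal.ofReal ((g x)^2 * x ^ (-(2*r+1))) ≤
      ENNReal.ofReal (1/r^2) *
        ∫⁻ t in Set.Ioc (0:ℝ) 1, ENNReal.ofReal ((g' t)^2 * t ^ (1-2*r)) := by
  set ψ : ℝ → ℝ≥0∞ := fun t => ENNReal.ofReal ((g' t)^2 * t ^ (1-r)) with hψdef
  have hψm : Measurable ψ :=
    ((hg'.pow_const 2).mul ((measurable_id.pow measurable_const))).ennreal_ofReal
  set c : ℝ → ℝ≥0∞ := fun x => ENNReal.ofReal (x ^ (-(r+1)) / r) with hcdef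
  have hcm : Measurable c := (((measurable_id.pow measurable_const)).div_const r).ennreal_ofReal
  -- pointwise bound via Cauchy-Schwarz
  have key : ∀ x ∈ Set.Ioc (0:ℝ) 1,
      ENNReal.ofReal ((g x)^2 * x ^ (-(2*r+1))) ≤ (∫⁻ t in Set.Ioc 0 x, ψ t) * c x := by
    intro x hx
    have hx0 : (0:ℝ) < x := hx.1
    have h1 : ENNReal.ofReal |g x| ≤ ∫⁻ t in Set.Ioc 0 x, ENNReal.ofReal |g' t| := by
      rw [hg x hx, intervalIntegral.integral_of_le hx0.le]
      calc ENNReal.ofReal |∫ t in Set.Ioc (0:ℝ) x, g' t|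
          = ‖∫ t in Set.Ioc (0:ℝ) x, g' t‖ₑ := (Real.enorm_eq_ofReal_abs _).symm
        _ ≤ ∫⁻ t in Set.Ioc (0:ℝ) x, ‖g' t‖ₑ :=
            enorm_integral_le_lintegral_enorm _
        _ = ∫⁻ t in Set.Ioc (0:ℝ) x, ENNReal.ofReal |g' t| := by
            simp_rw [Real.enorm_eq_ofReal_abs]
    set f₁ : ℝ → ℝ≥0∞ := fun t => ENNReal.ofReal (|g' t| * t ^ ((1-r)/2)) with hf₁
    set f₂ : ℝ → ℝ≥0∞ := fun t => ENNReal.ofReal (t ^ ((r-1)/2)) with hf₂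
    have hsplit : ∫⁻ t in Set.Ioc (0:ℝ) x, ENNReal.ofReal |g' t|
        = ∫⁻ t in Set.Ioc (0:ℝ) x, (f₁ * f₂) t := by
      refine setLIntegral_congr_fun measurableSet_Ioc (fun t ht => ?_)
      have ht0 : (0:ℝ) < t := ht.1
      simp only [hf₁, hf₂, Pi.mul_apply]
      rw [← ENNReal.ofReal_mul (by positivity), mul_assoc, ← Real.rpow_add ht0,
        show (1-r)/2 + (r-1)/2 = 0 from by ring, Real.rpow_zero, mul_one]
    have hCS := ENNReal.lintegral_mul_le_Lp_mul_Lq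
      (volume.restrict (Set.Ioc (0:ℝ) x)) Real.HolderConjugate.two_two
      (f := f₁) (g := f₂)
      ((hg'.abs.mul ((measurable_id.pow measurable_const))).ennreal_ofReal).aemeasurable
      (((measurable_id.pow measurable_const)).ennreal_ofReal).aemeasurable
    have hf₁sq : ∫⁻ t in Set.Ioc (0:ℝ) x, f₁ t ^ (2:ℝ)
        = ∫⁻ t in Set.Ioc (0:ℝ) x, ψ t := by
      refine setLIntegral_congr_fun measurableSet_Ioc (fun t ht => ?_)
      have ht0 : (0:ℝ) < t := ht.1
      simp only [hf₁, hψdef]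
      rw [ENNReal.ofReal_rpow_of_nonneg (by positivity) (by norm_num), Real.rpow_two,
        mul_pow, sq_abs, ← Real.rpow_natCast (t ^ ((1-r)/2)) 2, ← Real.rpow_mul ht0.le]
      norm_num
    have hf₂sq : ∫⁻ t in Set.Ioc (0:ℝ) x, f₂ t ^ (2:ℝ) = ENNReal.ofReal (x ^ r / r) := by
      have e1 : ∫⁻ t in Set.Ioc (0:ℝ) x, f₂ t ^ (2:ℝ)
          = ∫⁻ t in Set.Ioc (0:ℝ) x, ENNReal.ofReal (t ^ (r-1)) := by
        refine setLIntegral_congr_fun measurableSet_Ioc (fun t ht => ?_)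
        have ht0 : (0:ℝ) < t := ht.1
        simp only [hf₂]
        rw [ENNReal.ofReal_rpow_of_nonneg (Real.rpow_nonneg ht0.le _) (by norm_num), Real.rpow_two,
          ← Real.rpow_natCast (t ^ ((r-1)/2)) 2, ← Real.rpow_mul ht0.le]
        norm_num
      have hint : IntegrableOn (fun t : ℝ => t ^ (r-1)) (Set.Ioc 0 x) :=
        (intervalIntegral.intervalIntegrable_rpow' (by linarith)).1
      have e2 : ∫ t in Set.Ioc (0:ℝ) x, t ^ (r-1) = x ^ r / r := by
        rw [← intervalIntegral.integral_of_le hx0.le,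
          integral_rpow (Or.inl (by linarith : (-1:ℝ) < r - 1))]
        rw [show r - 1 + 1 = r from by ring, Real.zero_rpow hr.ne']
        ring
      rw [e1, ← ofReal_integral_eq_lintegral_ofReal hint
        ((ae_restrict_iff' measurableSet_Ioc).2 (ae_of_all _ fun t ht =>
          Real.rpow_nonneg ht.1.le _)), e2]
    have hbound : ENNReal.ofReal |g x|
        ≤ ((∫⁻ t in Set.Ioc (0:ℝ) x, ψ t) ^ ((1:ℝ)/2)) *
          (ENNReal.ofReal (x ^ r / r)) ^ ((1:ℝ)/2) := by
      calc ENNReal.ofReal |g x| ≤ ∫⁻ t in Set.Ioc 0 x, ENNReal.ofReal |g' t| := h1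
        _ = ∫⁻ t in Set.Ioc (0:ℝ) x, (f₁ * f₂) t := hsplit
        _ ≤ _ := by rw [← hf₁sq, ← hf₂sq]; exact hCS
    have hsq : ENNReal.ofReal ((g x)^2)
        ≤ (∫⁻ t in Set.Ioc (0:ℝ) x, ψ t) * ENNReal.ofReal (x ^ r / r) := by
      have h2 := pow_le_pow_left₀ zero_le hbound 2
      rw [← sq_abs, ENNReal.ofReal_pow (abs_nonneg _)]
      refine le_trans h2 (le_of_eq ?_)
      rw [mul_pow, ← ENNReal.rpow_natCast (_ ^ ((1:ℝ)/2)) 2,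
        ← ENNReal.rpow_natCast (ENNReal.ofReal (x ^ r / r) ^ ((1:ℝ)/2)) 2,
        ← ENNReal.rpow_mul, ← ENNReal.rpow_mul]
      norm_num
    calc ENNReal.ofReal ((g x)^2 * x ^ (-(2*r+1)))
        = ENNReal.ofReal ((g x)^2) * ENNReal.ofReal (x ^ (-(2*r+1))) :=
          ENNReal.ofReal_mul (sq_nonneg _)
      _ ≤ (∫⁻ t in Set.Ioc (0:ℝ) x, ψ t) * ENNReal.ofReal (x ^ r / r) *
            ENNReal.ofReal (x ^ (-(2*r+1))) := mul_le_mul' hsq le_rfl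
      _ = (∫⁻ t in Set.Ioc (0:ℝ) x, ψ t) * c x := by
          rw [mul_assoc, ← ENNReal.ofReal_mul (by positivity), hcdef]
          congr 2
          rw [div_mul_eq_mul_div, ← Real.rpow_add hx0,
            show r + -(2*r+1) = -(r+1) from by ring]
  have hcne : ∀ x : ℝ, c x ≠ ⊤ := fun x => ENNReal.ofReal_ne_top
  have hψne : ∀ t : ℝ, ψ t ≠ ⊤ := fun t => ENNReal.ofReal_ne_top
  have hindic : ∀ x ∈ Set.Ioc (0:ℝ) 1,
      (∫⁻ t in Set.Ioc 0 x, ψ t) = ∫⁻ t in Set.Ioc (0:ℝ) 1, (Set.Iic x).indicator ψ t := by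
    intro x hx
    rw [lintegral_indicator measurableSet_Iic,
      Measure.restrict_restrict measurableSet_Iic]
    congr 2
    ext t
    simp only [Set.mem_inter_iff, Set.mem_Iic, Set.mem_Ioc]
    constructor
    · rintro ⟨h1, h2⟩; exact ⟨h2, h1, h2.trans hx.2⟩
    · rintro ⟨h1, h2, h3⟩; exact ⟨h2, h1⟩
  have hswapmeas : AEMeasurable (Function.uncurry fun x t => ((Set.Iic x).indicator ψ t) * c x)
      ((volume.restrict (Set.Ioc (0:ℝ) 1)).prod (volume.restrict (Set.Ioc (0:ℝ) 1))) := by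
    have heq : (Function.uncurry fun x t => ((Set.Iic x).indicator ψ t) * c x)
        = ({q : ℝ × ℝ | q.2 ≤ q.1}.indicator (fun q => ψ q.2 * c q.1)) := by
      funext p
      rcases p with ⟨x, t⟩
      by_cases hp : t ≤ x
      · show (Set.Iic x).indicator ψ t * c x = _
        rw [Set.indicator_of_mem (Set.mem_Iic.2 hp),
          Set.indicator_of_mem (by exact hp : (x, t) ∈ {q : ℝ × ℝ | q.2 ≤ q.1})]
      · show (Set.Iic x).indicator ψ t * c x = _
        rw [Set.indicator_of_notMem (by simpa using hp),
          Set.indicator_of_notMem (by exact hp : (x, t) ∉ {q : ℝ × ℝ | q.2 ≤ q.1}), zero_mul]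
    rw [heq]
    exact (Measurable.indicator ((hψm.comp measurable_snd).mul (hcm.comp measurable_fst))
      ((isClosed_le continuous_snd continuous_fst).measurableSet)).aemeasurable
  have hswap : (∫⁻ x in Set.Ioc (0:ℝ) 1, ∫⁻ t in Set.Ioc (0:ℝ) 1,
        ((Set.Iic x).indicator ψ t) * c x)
      = ∫⁻ t in Set.Ioc (0:ℝ) 1, ∫⁻ x in Set.Ioc (0:ℝ) 1,
        ((Set.Iic x).indicator ψ t) * c x :=
    lintegral_lintegral_swap hswapmeas
  have hinner : ∀ t ∈ Set.Ioc (0:ℝ) 1,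
      (∫⁻ x in Set.Ioc (0:ℝ) 1, ((Set.Iic x).indicator ψ t) * c x)
        ≤ ENNReal.ofReal (1/r^2) * ENNReal.ofReal ((g' t)^2 * t ^ (1-2*r)) := by
    intro t ht
    have e1 : ∀ x : ℝ, ((Set.Iic x).indicator ψ t) * c x
        = ψ t * ((Set.Ici t).indicator c x) := by
      intro x
      by_cases hp : t ≤ x
      · rw [Set.indicator_of_mem (Set.mem_Iic.2 hp), Set.indicator_of_mem (Set.mem_Ici.2 hp)]
      · rw [Set.indicator_of_notMem (by simpa using hp),
          Set.indicator_of_notMem (by simpa using hp), zero_mul, mul_zero]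
    have hci : IntegrableOn (fun x : ℝ => x ^ (-(r+1)) / r) (Set.Icc t 1) := by
      refine ContinuousOn.integrableOn_Icc ?_
      exact (continuousOn_id.rpow_const fun x hx =>
        Or.inl (ne_of_gt (lt_of_lt_of_le ht.1 hx.1))).div_const r
    have hIcc : ∫⁻ x in Set.Icc t 1, c x = ENNReal.ofReal ((t ^ (-r) - 1) / r^2) := by
      have hval : ∫ x in Set.Icc t 1, x ^ (-(r+1)) / r = (t ^ (-r) - 1) / r^2 := by
        rw [MeasureTheory.integral_Icc_eq_integral_Ioc,
          ← intervalIntegral.integral_of_le ht.2, intervalIntegral.integral_div,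
          integral_rpow (Or.inr ⟨by intro hh; exact hr.ne' (by linarith),
            notMem_uIcc_of_lt ht.1 one_pos⟩),
          show -(r+1) + 1 = -r from by ring, Real.one_rpow]
        field_simp
        ring
      rw [← hval]
      refine (ofReal_integral_eq_lintegral_ofReal hci ?_).symm
      exact (ae_restrict_iff' measurableSet_Icc).2 (ae_of_all _ fun x hx =>
        div_nonneg (Real.rpow_nonneg (le_trans ht.1.le hx.1) _) hr.le)
    calc (∫⁻ x in Set.Ioc (0:ℝ) 1, ((Set.Iic x).indicator ψ t) * c x)
        = ∫⁻ x in Set.Ioc (0:ℝ) 1, ψ t * ((Set.Ici t).indicator c x) :=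
          lintegral_congr fun x => e1 x
      _ = ψ t * ∫⁻ x in Set.Ioc (0:ℝ) 1, (Set.Ici t).indicator c x :=
          lintegral_const_mul' _ _ (hψne t)
      _ = ψ t * ∫⁻ x in Set.Icc t 1, c x := by
          have hset : Set.Ici t ∩ Set.Ioc 0 1 = Set.Icc t 1 := by
            ext x
            simp only [Set.mem_inter_iff, Set.mem_Ici, Set.mem_Ioc, Set.mem_Icc]
            constructor
            · rintro ⟨h1, h2, h3⟩; exact ⟨h1, h3⟩
            · rintro ⟨h1, h2⟩; exact ⟨h1, lt_of_lt_of_le ht.1 h1, h2⟩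
          rw [lintegral_indicator measurableSet_Ici,
            Measure.restrict_restrict measurableSet_Ici, hset]
      _ ≤ ψ t * ENNReal.ofReal (t ^ (-r) / r^2) := by
          rw [hIcc]
          exact mul_le_mul' le_rfl (ENNReal.ofReal_le_ofReal (by gcongr; linarith))
      _ = ENNReal.ofReal (1/r^2) * ENNReal.ofReal ((g' t)^2 * t ^ (1-2*r)) := by
          simp only [hψdef]
          rw [← ENNReal.ofReal_mul (mul_nonneg (sq_nonneg _) (Real.rpow_nonneg ht.1.le _)),
            ← ENNReal.ofReal_mul (by positivity : (0:ℝ) ≤ 1/r^2)]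
          congr 1
          have ht2 : t ^ (1-r) * t ^ (-r) = t ^ (1-2*r) := by
            rw [← Real.rpow_add ht.1]; congr 1; ring
          rw [← ht2]; ring
  calc ∫⁻ x in Set.Ioc (0:ℝ) 1, ENNReal.ofReal ((g x)^2 * x ^ (-(2*r+1)))
      ≤ ∫⁻ x in Set.Ioc (0:ℝ) 1, (∫⁻ t in Set.Ioc 0 x, ψ t) * c x :=
        lintegral_mono_ae ((ae_restrict_iff' measurableSet_Ioc).2 (ae_of_all _ key))
    _ = ∫⁻ x in Set.Ioc (0:ℝ) 1, ∫⁻ t in Set.Ioc (0:ℝ) 1,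
          ((Set.Iic x).indicator ψ t) * c x := by
        refine setLIntegral_congr_fun measurableSet_Ioc (fun x hx => ?_)
        rw [hindic x hx, ← lintegral_mul_const' (c x) _ (hcne x)]
    _ = ∫⁻ t in Set.Ioc (0:ℝ) 1, ∫⁻ x in Set.Ioc (0:ℝ) 1,
          ((Set.Iic x).indicator ψ t) * c x := hswap
    _ ≤ ∫⁻ t in Set.Ioc (0:ℝ) 1, ENNReal.ofReal (1/r^2) *
          ENNReal.ofReal ((g' t)^2 * t ^ (1-2*r)) :=
        lintegral_mono_ae ((ae_restrict_iff' measurableSet_Ioc).2 (ae_of_all _ hinner))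
    _ = ENNReal.ofReal (1/r^2) *
          ∫⁻ t in Set.Ioc (0:ℝ) 1, ENNReal.ofReal ((g' t)^2 * t ^ (1-2*r)) :=
        lintegral_const_mul' _ _ ENNReal.ofReal_ne_top


/-- Higher-order Hardy inequality on `[0,1]`: if `h, h', …, h^{(n-1)}` are absolutely
continuous on `[0,1]` (encoded by the fundamental-theorem-of-calculus representation)
and vanish at `0`, then `∫₀¹ |h(x)/xⁿ|² dx ≤ (4ⁿ/((2n−1)‼)²) ∫₀¹ |h^{(n)}(x)|² dx`. -/
theorem stmt2 (n : ℕ) (hn : 1 ≤ n) (h : ℝ → ℝ)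
    (hAC : ∀ j < n, ∀ x ∈ Set.Icc (0:ℝ) 1,
      iteratedDeriv j h x = ∫ t in (0:ℝ)..x, iteratedDeriv (j+1) h t)
    (h0 : ∀ j < n, iteratedDeriv j h 0 = 0)
    (hint : IntegrableOn (fun x => (iteratedDeriv n h x)^2) (Set.Icc (0:ℝ) 1)) :
    ∫ x in (0:ℝ)..1, (h x / x ^ n)^2
      ≤ (4 ^ n / ((Nat.doubleFactorial (2*n - 1) : ℝ))^2) *
        ∫ x in (0:ℝ)..1, (iteratedDeriv n h x)^2 := by
  have hmeas : ∀ m : ℕ, Measurable (iteratedDeriv (m+1) h) := by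
    intro m
    rw [iteratedDeriv_succ]
    exact measurable_deriv _
  set C : ℕ → ℝ := fun k => 4^k / (∏ i ∈ Finset.range k, (2*(i:ℝ)+1))^2 with hC
  have hCpos : ∀ k, 0 < C k := by
    intro k
    have : 0 < ∏ i ∈ Finset.range k, (2*(i:ℝ)+1) :=
      Finset.prod_pos fun i _ => by positivity
    simp only [hC]
    positivity
  have key : ∀ k : ℕ, k ≤ n →
      (∫⁻ x in Set.Ioc (0:ℝ) 1,
        ENNReal.ofReal ((iteratedDeriv (n-k) h x)^2 * x ^ (-(2*(k:ℝ)))))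
      ≤ ENNReal.ofReal (C k) *
        ∫⁻ x in Set.Ioc (0:ℝ) 1, ENNReal.ofReal ((iteratedDeriv n h x)^2) := by
    intro k
    induction k with
    | zero =>
      intro _
      simp only [Nat.sub_zero, Nat.cast_zero, mul_zero, neg_zero, Real.rpow_zero, mul_one,
        hC, Finset.range_zero, Finset.prod_empty, pow_zero, one_pow, div_one,
        ENNReal.ofReal_one, one_mul]
      exact le_rfl
    | succ k ih =>
      intro hk1
      have hk : k ≤ n := by omega
      set r : ℝ := (k:ℝ) + 1/2 with hr
      have hg'meas : Measurable (iteratedDeriv (n-k) h) := by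
        rw [show n-k = (n-k-1)+1 from by omega]
        exact hmeas _
      have hgrep : ∀ x ∈ Set.Ioc (0:ℝ) 1,
          iteratedDeriv (n-(k+1)) h x = ∫ t in (0:ℝ)..x, iteratedDeriv (n-k) h t := by
        intro x hx
        have h1 := hAC (n-(k+1)) (by omega) x ⟨hx.1.le, hx.2⟩
        rw [show n-(k+1)+1 = n-k from by omega] at h1
        exact h1
      have step := hardy_step r (by positivity) _ _ hg'meas hgrep
      have eexp1 : -(2*((k+1:ℕ):ℝ)) = -(2*r+1) := by rw [hr]; push_cast; ring
      have eexp2 : (1-2*r) = -(2*(k:ℝ)) := by rw [hr]; ring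
      calc (∫⁻ x in Set.Ioc (0:ℝ) 1,
            ENNReal.ofReal ((iteratedDeriv (n-(k+1)) h x)^2 * x ^ (-(2*((k+1:ℕ)):ℝ))))
          = ∫⁻ x in Set.Ioc (0:ℝ) 1,
            ENNReal.ofReal ((iteratedDeriv (n-(k+1)) h x)^2 * x ^ (-(2*r+1))) := by
            simp only [eexp1]
        _ ≤ ENNReal.ofReal (1/r^2) * ∫⁻ t in Set.Ioc (0:ℝ) 1,
            ENNReal.ofReal ((iteratedDeriv (n-k) h t)^2 * t ^ (1-2*r)) := step
        _ = ENNReal.ofReal (1/r^2) * ∫⁻ t in Set.Ioc (0:ℝ) 1,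
            ENNReal.ofReal ((iteratedDeriv (n-k) h t)^2 * t ^ (-(2*(k:ℝ)))) := by
            simp only [eexp2]
        _ ≤ ENNReal.ofReal (1/r^2) * (ENNReal.ofReal (C k) *
            ∫⁻ x in Set.Ioc (0:ℝ) 1, ENNReal.ofReal ((iteratedDeriv n h x)^2)) :=
            mul_le_mul' le_rfl (ih hk)
        _ = ENNReal.ofReal (C (k+1)) *
            ∫⁻ x in Set.Ioc (0:ℝ) 1, ENNReal.ofReal ((iteratedDeriv n h x)^2) := by
            rw [← mul_assoc, ← ENNReal.ofReal_mul (by positivity)]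
            congr 2
            have hP : 0 < ∏ i ∈ Finset.range k, (2*(i:ℝ)+1) :=
              Finset.prod_pos fun i _ => by positivity
            simp only [hC, hr, Finset.prod_range_succ]
            have h2k : (0:ℝ) < 2*(k:ℝ)+1 := by positivity
            field_simp
            ring
  -- final assembly
  have hintIoc : IntegrableOn (fun x => (iteratedDeriv n h x)^2) (Set.Ioc (0:ℝ) 1) :=
    hint.mono_set Set.Ioc_subset_Icc_self
  have hI0 : (∫⁻ x in Set.Ioc (0:ℝ) 1, ENNReal.ofReal ((iteratedDeriv n h x)^2))
      = ENNReal.ofReal (∫ x in Set.Ioc (0:ℝ) 1, (iteratedDeriv n h x)^2) :=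
    (ofReal_integral_eq_lintegral_ofReal hintIoc (ae_of_all _ fun x => sq_nonneg _)).symm
  have hFeq : ∀ x ∈ Set.Ioc (0:ℝ) 1,
      ENNReal.ofReal ((iteratedDeriv (n-n) h x)^2 * x ^ (-(2*(n:ℝ))))
        = ENNReal.ofReal ((h x / x ^ n)^2) := by
    intro x hx
    have hx0 : (0:ℝ) < x := hx.1
    congr 1
    rw [Nat.sub_self, iteratedDeriv_zero, div_pow, ← pow_mul,
      show n*2 = 2*n from by ring, div_eq_mul_inv]
    congr 1
    rw [show -(2*(n:ℝ)) = -((2*n : ℕ):ℝ) from by push_cast; ring,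
      Real.rpow_neg hx0.le, Real.rpow_natCast]
  have hL : (∫⁻ x in Set.Ioc (0:ℝ) 1, ENNReal.ofReal ((h x / x ^ n)^2))
      ≤ ENNReal.ofReal (C n * ∫ x in Set.Ioc (0:ℝ) 1, (iteratedDeriv n h x)^2) := by
    calc (∫⁻ x in Set.Ioc (0:ℝ) 1, ENNReal.ofReal ((h x / x ^ n)^2))
        = ∫⁻ x in Set.Ioc (0:ℝ) 1,
            ENNReal.ofReal ((iteratedDeriv (n-n) h x)^2 * x ^ (-(2*(n:ℝ)))) :=
          (setLIntegral_congr_fun measurableSet_Ioc hFeq).symm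
      _ ≤ ENNReal.ofReal (C n) *
            ∫⁻ x in Set.Ioc (0:ℝ) 1, ENNReal.ofReal ((iteratedDeriv n h x)^2) :=
          key n le_rfl
      _ = ENNReal.ofReal (C n * ∫ x in Set.Ioc (0:ℝ) 1, (iteratedDeriv n h x)^2) := by
          rw [hI0, ← ENNReal.ofReal_mul (hCpos n).le]
  have hCeq : C n = 4 ^ n / ((Nat.doubleFactorial (2*n - 1) : ℝ))^2 := by
    have hdd : Nat.doubleFactorial (2*n-1) = ∏ i ∈ Finset.range n, (2*i+1) := by
      rw [show 2*n-1 = 2*(n-1)+1 from by omega, Nat.doubleFactorial_eq_prod_odd]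
      conv_rhs => rw [show n = (n-1)+1 from by omega, Finset.prod_range_succ']
      simp
    simp only [hC, hdd]
    push_cast
    ring
  have hRnn : 0 ≤ ∫ x in (0:ℝ)..1, (iteratedDeriv n h x)^2 :=
    intervalIntegral.integral_nonneg zero_le_one fun x _ => sq_nonneg _
  by_cases hFi : IntervalIntegrable (fun x => (h x / x ^ n)^2) volume 0 1
  · have hFiIoc : IntegrableOn (fun x => (h x / x ^ n)^2) (Set.Ioc (0:ℝ) 1) := hFi.1
    have heq : ENNReal.ofReal (∫ x in Set.Ioc (0:ℝ) 1, (h x / x ^ n)^2)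
        = ∫⁻ x in Set.Ioc (0:ℝ) 1, ENNReal.ofReal ((h x / x ^ n)^2) :=
      ofReal_integral_eq_lintegral_ofReal hFiIoc (ae_of_all _ fun x => sq_nonneg _)
    have hle : (∫ x in Set.Ioc (0:ℝ) 1, (h x / x ^ n)^2)
        ≤ C n * ∫ x in Set.Ioc (0:ℝ) 1, (iteratedDeriv n h x)^2 := by
      have := heq ▸ hL
      rw [ENNReal.ofReal_le_ofReal_iff] at this
      · exact this
      · exact mul_nonneg (hCpos n).le (integral_nonneg fun x => sq_nonneg _)
    rw [intervalIntegral.integral_of_le zero_le_one, intervalIntegral.integral_of_le zero_le_one,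
      ← hCeq]
    exact hle
  · rw [intervalIntegral.integral_undef hFi]
    have : 0 ≤ 4 ^ n / ((Nat.doubleFactorial (2*n - 1) : ℝ))^2 := by positivity
    exact mul_nonneg this hRnn
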